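/- Let X be a zigzag poset and F a sheaf of finite-dimensional vector spaces on X. Then H^k(X, F) = 0 for all k ≥ 2. -/

import Mathlib

open CategoryTheory

/-! Zigzag posets.  A zigzag poset is a finite poset whose Hasse diagram is a path
`x_0 — x_1 — ... — x_n` with arbitrarily oriented edges.  We encode the orientation
of the edge between `x_l` and `x_{l+1}` by `o l : Bool` (`true` means `x_l < x_{l+1}`),
and `x_i ≤ x_j` iff all the edges between them point from `x_i` towards `x_j`. -/

/-- The order relation of the zigzag poset with edge orientations `o`. -/
def zigzagLE (o : ℕ → Bool) (i j : ℕ) : Prop :=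
  (i ≤ j ∧ ∀ l, i ≤ l → l < j → o l = true) ∨
  (j ≤ i ∧ ∀ l, j ≤ l → l < i → o l = false)

theorem zigzagLE_refl (o : ℕ → Bool) (i : ℕ) : zigzagLE o i i :=
  Or.inl ⟨le_rfl, fun _ h1 h2 => absurd (lt_of_le_of_lt h1 h2) (lt_irrefl _)⟩

theorem zigzagLE_trans (o : ℕ → Bool) (i j l : ℕ)
    (h1 : zigzagLE o i j) (h2 : zigzagLE o j l) : zigzagLE o i l := by
  rcases h1 with ⟨hij, hup1⟩ | ⟨hji, hdn1⟩ <;> rcases h2 with ⟨hjl, hup2⟩ | ⟨hlj, hdn2⟩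
  · refine Or.inl ⟨le_trans hij hjl, fun m hm1 hm2 => ?_⟩
    rcases Nat.lt_or_ge m j with h | h
    · exact hup1 m hm1 h
    · exact hup2 m h hm2
  · rcases le_or_gt i l with h | h
    · exact Or.inl ⟨h, fun m hm1 hm2 => hup1 m hm1 (lt_of_lt_of_le hm2 hlj)⟩
    · exact Or.inr ⟨le_of_lt h, fun m hm1 hm2 => hdn2 m hm1 (lt_of_lt_of_le hm2 hij)⟩
  · rcases le_or_gt i l with h | h
    · exact Or.inl ⟨h, fun m hm1 hm2 => hup2 m (le_trans hji hm1) hm2⟩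
    · exact Or.inr ⟨le_of_lt h, fun m hm1 hm2 => hdn1 m (le_trans hjl hm1) hm2⟩
  · refine Or.inr ⟨le_trans hlj hji, fun m hm1 hm2 => ?_⟩
    rcases Nat.lt_or_ge m j with h | h
    · exact hdn2 m hm1 h
    · exact hdn1 m h hm2

theorem zigzagLE_antisymm (o : ℕ → Bool) (i j : ℕ)
    (h1 : zigzagLE o i j) (h2 : zigzagLE o j i) : i = j := by
  rcases h1 with ⟨hij, hup1⟩ | ⟨hji, hdn1⟩ <;>
    rcases h2 with ⟨hji', hup2⟩ | ⟨hij', hdn2⟩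
  · omega
  · rcases Nat.lt_or_ge i j with h | h
    · have ht := hup1 i le_rfl h
      have hf := hdn2 i le_rfl h
      simp [ht] at hf
    · omega
  · rcases Nat.lt_or_ge j i with h | h
    · have ht := hup2 j le_rfl h
      have hf := hdn1 j le_rfl h
      simp [ht] at hf
    · omega
  · omega

/-- The zigzag poset on `{x_0, ..., x_n}` with edge orientations `o`. -/
def Zigzag (n : ℕ) (o : ℕ → Bool) : Type := Fin (n + 1)

instance (n : ℕ) (o : ℕ → Bool) : PartialOrder (Zigzag n o) where
  le i j := zigzagLE o (Fin.val i) (Fin.val j)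
  le_refl i := zigzagLE_refl o _
  le_trans i j l := zigzagLE_trans o _ _ _
  le_antisymm i j h1 h2 := Fin.ext (zigzagLE_antisymm o _ _ h1 h2)

/-- The index of a point of the zigzag poset. -/
def Zigzag.idx {n : ℕ} {o : ℕ → Bool} (x : Zigzag n o) : ℕ := Fin.val x

/-- The alternating subposet `X' ⊆ X`: all minimal elements together with the
internal maximal elements (the maximal elements flanked by minimal elements on
both sides); this is the alternating sequence of minimal and internal maximal
elements of the zigzag. -/
def altSet (n : ℕ) (o : ℕ → Bool) : Set (Zigzag n o) :=
  {x | IsMin x ∨ (IsMax x ∧ (∃ y : Zigzag n o, IsMin y ∧ y.idx < x.idx) ∧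
    (∃ y : Zigzag n o, IsMin y ∧ x.idx < y.idx))}

/-- The alternating subposet, with the induced order. -/
def AltSub (n : ℕ) (o : ℕ → Bool) : Type := {x : Zigzag n o // x ∈ altSet n o}

instance (n : ℕ) (o : ℕ → Bool) : PartialOrder (AltSub n o) :=
  inferInstanceAs (PartialOrder {x : Zigzag n o // x ∈ altSet n o})

/-- The inclusion `ι : X' ↪ X` is order preserving. -/
lemma altIncl_monotone (n : ℕ) (o : ℕ → Bool) :
    Monotone (fun x : AltSub n o => (x.val : Zigzag n o)) := fun _ _ h => h

/-- The restriction (pullback) functor `ι*` of sheaves along the inclusion of the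
alternating subposet. -/
noncomputable def restrictAlt (n : ℕ) (o : ℕ → Bool) (C : Type*) [Category C] :
    (Zigzag n o ⥤ C) ⥤ (AltSub n o ⥤ C) :=
  (Functor.whiskeringLeft (AltSub n o) (Zigzag n o) C).obj (altIncl_monotone n o).functor

open CategoryTheory.Limits

namespace ZigzagVanish

open CategoryTheory Limits

variable {k : Type} [Field k] {n : ℕ} {o : ℕ → Bool}

/-- Constructing an element of the zigzag from an index. -/
def zmk (n : ℕ) (o : ℕ → Bool) (m : ℕ) (hm : m < n + 1) : Zigzag n o := (⟨m, hm⟩ : Fin (n + 1))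

@[simp] lemma zmk_idx (m : ℕ) (hm : m < n + 1) : (zmk n o m hm).idx = m := rfl

lemma zext {x y : Zigzag n o} (h : x.idx = y.idx) : x = y := Fin.ext h

lemma idx_lt (x : Zigzag n o) : x.idx < n + 1 := (show Fin (n+1) from x).isLt

lemma le_def {x y : Zigzag n o} : x ≤ y ↔ zigzagLE o x.idx y.idx := Iff.rfl

lemma le_up {x y : Zigzag n o} (hxy : x.idx ≤ y.idx)
    (h : ∀ l, x.idx ≤ l → l < y.idx → o l = true) : x ≤ y := Or.inl ⟨hxy, h⟩

lemma le_down {x y : Zigzag n o} (hxy : y.idx ≤ x.idx)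
    (h : ∀ l, y.idx ≤ l → l < x.idx → o l = false) : x ≤ y := Or.inr ⟨hxy, h⟩

lemma up_of_le {x y : Zigzag n o} (h : x ≤ y) (hlt : x.idx < y.idx) :
    ∀ l, x.idx ≤ l → l < y.idx → o l = true := by
  rcases (le_def.1 h) with ⟨_, hh⟩ | ⟨hh, _⟩
  · exact hh
  · omega

lemma down_of_le {x y : Zigzag n o} (h : x ≤ y) (hlt : y.idx < x.idx) :
    ∀ l, y.idx ≤ l → l < x.idx → o l = false := by
  rcases (le_def.1 h) with ⟨hh, _⟩ | ⟨_, hh⟩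
  · omega
  · exact hh

lemma hom_eq {a b : Zigzag n o} (f g : a ⟶ b) : f = g := Subsingleton.elim f g

lemma map_map (F : Zigzag n o ⥤ ModuleCat k) {a b c : Zigzag n o} (h1 : a ≤ b) (h2 : b ≤ c)
    {h3 : a ≤ c} (v : F.obj a) :
    F.map (homOfLE h2) (F.map (homOfLE h1) v) = F.map (homOfLE h3) v := by
  have : homOfLE h1 ≫ homOfLE h2 = homOfLE h3 := hom_eq _ _
  rw [← this, F.map_comp]
  rfl

/-- The type of Hasse edges of the zigzag. -/
def Edge (n : ℕ) (o : ℕ → Bool) : Type :=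
  {p : Zigzag n o × Zigzag n o // p.1 ≤ p.2 ∧ (p.2.idx = p.1.idx + 1 ∨ p.1.idx = p.2.idx + 1)}

@[reducible] def Edge.src (e : Edge n o) : Zigzag n o := e.1.1
@[reducible] def Edge.tgt (e : Edge n o) : Zigzag n o := e.1.2
lemma Edge.le (e : Edge n o) : e.src ≤ e.tgt := e.2.1

/-- The "cofree" functor with components `V i` placed on the down-sets of `x i`. -/
def cofree {ι : Type} (x : ι → Zigzag n o) (V : ι → ModuleCat k) :
    Zigzag n o ⥤ ModuleCat k where
  obj y := ModuleCat.of k (∀ i, PLift (y ≤ x i) → V i)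
  map {y y'} f := ModuleCat.ofHom
    { toFun := fun g i h => g i ⟨(leOfHom f).trans h.down⟩
      map_add' := fun _ _ => rfl
      map_smul' := fun _ _ => rfl }
  map_id _ := rfl
  map_comp _ _ := rfl

lemma cofree_injective {ι : Type} (x : ι → Zigzag n o) (V : ι → ModuleCat k) :
    Injective (cofree x V) := by
  constructor
  intro G H τ f hf
  have hinj : ∀ i, LinearMap.ker (f.app (x i)).hom = ⊥ := by
    intro i
    rw [LinearMap.ker_eq_bot, ← ModuleCat.mono_iff_injective]
    infer_instance
  choose r hr using fun i => (f.app (x i)).hom.exists_leftInverse_of_injective (hinj i)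
  refine ⟨⟨fun y => ModuleCat.ofHom
      { toFun := fun b i h => τ.app (x i) (r i (H.map (homOfLE h.down) b)) i ⟨le_rfl⟩
        map_add' := fun b b' => by
          funext i h
          simp only [map_add]
          rfl
        map_smul' := fun c b => by
          funext i h
          simp only [map_smul]
          rfl }, ?_⟩, ?_⟩
  · intro y y' φ
    ext b
    funext i h
    show τ.app (x i) (r i (H.map (homOfLE h.down) (H.map φ b))) i ⟨le_rfl⟩
      = τ.app (x i) (r i (H.map (homOfLE ((leOfHom φ).trans h.down)) b)) i ⟨le_rfl⟩
    rw [hom_eq φ (homOfLE (leOfHom φ)), map_map]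
  · ext y a
    funext i h
    show τ.app (x i) (r i (H.map (homOfLE h.down) (f.app y a))) i ⟨le_rfl⟩ = τ.app y a i h
    have h1 : H.map (homOfLE h.down) (f.app y a) = f.app (x i) (G.map (homOfLE h.down) a) :=
      (congrArg (fun φ => φ a) (f.naturality (homOfLE h.down))).symm
    have h2 : r i (f.app (x i) (G.map (homOfLE h.down) a)) = G.map (homOfLE h.down) a :=
      LinearMap.congr_fun (hr i) (G.map (homOfLE h.down) a)
    rw [h1, h2]
    have h5 : τ.app (x i) (G.map (homOfLE h.down) a)
        = (cofree x V).map (homOfLE h.down) (τ.app y a) :=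
      congrArg (fun φ => φ a) (τ.naturality (homOfLE h.down))
    rw [h5]
    rfl

end ZigzagVanish
namespace ZigzagVanish

open CategoryTheory Limits

variable {k : Type} [Field k] {n : ℕ} {o : ℕ → Bool}

variable (F : Zigzag n o ⥤ ModuleCat k)

/-- Degree 0 of the resolution. -/
def I0 : Zigzag n o ⥤ ModuleCat k := cofree (fun v => v) (fun v => F.obj v)

/-- Degree 1 of the resolution. -/
def I1 : Zigzag n o ⥤ ModuleCat k := cofree (fun e : Edge n o => e.src) (fun e => F.obj e.tgt)

/-- The augmentation `F ⟶ I0 F`. -/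
def eps : F ⟶ I0 F where
  app y := ModuleCat.ofHom
    { toFun := fun a v h => F.map (homOfLE h.down) a
      map_add' := fun a b => by funext v h; simp only [map_add]; rfl
      map_smul' := fun c a => by funext v h; simp only [map_smul]; rfl }
  naturality {y y'} f := by
    ext a
    funext v h
    show F.map (homOfLE h.down) (F.map f a) = F.map (homOfLE ((leOfHom f).trans h.down)) a
    rw [hom_eq f (homOfLE (leOfHom f)), map_map]

/-- The differential `I0 F ⟶ I1 F`. -/
def dd : I0 F ⟶ I1 F where
  app y := ModuleCat.ofHom
    { toFun := fun g e h =>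
        F.map (homOfLE e.le) (g e.src h) - g e.tgt ⟨h.down.trans e.le⟩
      map_add' := fun g g' => by
        funext e h
        show F.map (homOfLE e.le) ((g + g') e.src h) - (g + g') e.tgt _ = _
        show F.map (homOfLE e.le) (g e.src h + g' e.src h)
          - (g e.tgt _ + g' e.tgt _) = _
        rw [map_add]
        show _ = (F.map (homOfLE e.le) (g e.src h) - g e.tgt _)
          + (F.map (homOfLE e.le) (g' e.src h) - g' e.tgt _)
        abel
      map_smul' := fun c g => by
        funext e h
        show F.map (homOfLE e.le) ((c • g) e.src h) - (c • g) e.tgt _ = _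
        show F.map (homOfLE e.le) (c • g e.src h) - c • g e.tgt _ = _
        rw [map_smul]
        show _ = c • (F.map (homOfLE e.le) (g e.src h) - g e.tgt _)
        rw [smul_sub] }
  naturality {y y'} f := rfl

lemma eps_dd : eps F ≫ dd F = 0 := by
  ext y a
  funext e h
  show F.map (homOfLE e.le) (F.map (homOfLE h.down) a)
    - F.map (homOfLE (h.down.trans e.le)) a = (0 : (I1 F).obj y) e h
  rw [map_map]
  exact sub_self _

section pointwise

variable {F}
variable (y : Zigzag n o)

/-- Compatible families propagate upwards. -/
lemma compat_up (g : ∀ v : Zigzag n o, PLift (y ≤ v) → F.obj v)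
    (hg : ∀ (e : Edge n o) (h : PLift (y ≤ e.src)),
      F.map (homOfLE e.le) (g e.src h) = g e.tgt ⟨h.down.trans e.le⟩) :
    ∀ (m : ℕ) (v : Zigzag n o), v.idx = y.idx + m → ∀ (h : y ≤ v),
      g v ⟨h⟩ = F.map (homOfLE h) (g y ⟨le_rfl⟩) := by
  intro m
  induction m with
  | zero =>
    intro v hv h
    obtain rfl : y = v := zext (by omega)
    rw [hom_eq (homOfLE h) (𝟙 y), F.map_id]
    rfl
  | succ m ih =>
    intro v hv h
    have hvy : y.idx < v.idx := by omega
    have htrue := up_of_le h hvy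
    have hwlt : y.idx + m < n + 1 := by have := idx_lt v; omega
    set w : Zigzag n o := zmk n o (y.idx + m) hwlt with hw
    have hwidx : w.idx = y.idx + m := rfl
    have hyw : y ≤ w := le_up (by omega) (fun l h1 h2 => htrue l h1 (by omega))
    have hwv : w ≤ v := le_up (by omega) (fun l h1 h2 => htrue l (by omega) (by omega))
    let e : Edge n o := ⟨(w, v), hwv, Or.inl (show v.idx = w.idx + 1 by omega)⟩
    have h1 := hg e ⟨hyw⟩
    have h2 := ih w hwidx hyw
    calc g v ⟨h⟩ = g v ⟨hyw.trans hwv⟩ := rfl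
      _ = F.map (homOfLE hwv) (g w ⟨hyw⟩) := by exact h1.symm
      _ = F.map (homOfLE hwv) (F.map (homOfLE hyw) (g y ⟨le_rfl⟩)) := by rw [h2]
      _ = F.map (homOfLE h) (g y ⟨le_rfl⟩) := map_map F hyw hwv _

/-- Compatible families propagate downwards. -/
lemma compat_down (g : ∀ v : Zigzag n o, PLift (y ≤ v) → F.obj v)
    (hg : ∀ (e : Edge n o) (h : PLift (y ≤ e.src)),
      F.map (homOfLE e.le) (g e.src h) = g e.tgt ⟨h.down.trans e.le⟩) :
    ∀ (m : ℕ) (v : Zigzag n o), y.idx = v.idx + m → ∀ (h : y ≤ v),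
      g v ⟨h⟩ = F.map (homOfLE h) (g y ⟨le_rfl⟩) := by
  intro m
  induction m with
  | zero =>
    intro v hv h
    obtain rfl : y = v := zext (by omega)
    rw [hom_eq (homOfLE h) (𝟙 y), F.map_id]
    rfl
  | succ m ih =>
    intro v hv h
    have hvy : v.idx < y.idx := by omega
    have hfalse := down_of_le h hvy
    have hwlt : v.idx + 1 < n + 1 := by have := idx_lt y; omega
    set w : Zigzag n o := zmk n o (v.idx + 1) hwlt with hw
    have hwidx : w.idx = v.idx + 1 := rfl
    have hyw : y ≤ w := le_down (by omega) (fun l h1 h2 => hfalse l (by omega) (by omega))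
    have hwv : w ≤ v := le_down (by omega) (fun l h1 h2 => hfalse l (by omega) (by omega))
    let e : Edge n o := ⟨(w, v), hwv, Or.inr (show w.idx = v.idx + 1 by omega)⟩
    have h1 := hg e ⟨hyw⟩
    have h2 := ih w (by omega) hyw
    calc g v ⟨h⟩ = g v ⟨hyw.trans hwv⟩ := rfl
      _ = F.map (homOfLE hwv) (g w ⟨hyw⟩) := by exact h1.symm
      _ = F.map (homOfLE hwv) (F.map (homOfLE hyw) (g y ⟨le_rfl⟩)) := by rw [h2]
      _ = F.map (homOfLE h) (g y ⟨le_rfl⟩) := map_map F hyw hwv _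

end pointwise

end ZigzagVanish
namespace ZigzagVanish

open CategoryTheory Limits

variable {k : Type} [Field k] {n : ℕ} {o : ℕ → Bool}
variable {F : Zigzag n o ⥤ ModuleCat k}

section surj

variable (y : Zigzag n o) (η : ∀ e : Edge n o, PLift (y ≤ e.src) → F.obj e.tgt)

/-- Solution, above `y`. -/
def gup : (m : ℕ) → (v : Zigzag n o) → v.idx = y.idx + m → y ≤ v → F.obj v
  | 0, _, _, _ => 0
  | m + 1, v, hv, h =>
    have hvy : y.idx < v.idx := by omega
    have htrue := up_of_le h hvy
    have hwlt : y.idx + m < n + 1 := by have := idx_lt v; omega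
    let w : Zigzag n o := zmk n o (y.idx + m) hwlt
    have hwidx : w.idx = y.idx + m := rfl
    have hyw : y ≤ w := le_up (by omega) (fun l h1 h2 => htrue l h1 (by omega))
    have hwv : w ≤ v := le_up (by omega)
      (fun l h1 h2 => htrue l (by exact le_trans (by omega) h1) (by omega))
    F.map (homOfLE hwv) (gup m w rfl hyw)
      - η ⟨(w, v), hwv, Or.inl (show v.idx = w.idx + 1 by omega)⟩ ⟨hyw⟩

/-- Solution, below `y`. -/
def gdown : (m : ℕ) → (v : Zigzag n o) → y.idx = v.idx + m → y ≤ v → F.obj v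
  | 0, _, _, _ => 0
  | m + 1, v, hv, h =>
    have hvy : v.idx < y.idx := by omega
    have hfalse := down_of_le h hvy
    have hwlt : v.idx + 1 < n + 1 := by have := idx_lt y; omega
    let w : Zigzag n o := zmk n o (v.idx + 1) hwlt
    have hwidx : w.idx = v.idx + 1 := rfl
    have hyw : y ≤ w := le_down (by omega)
      (fun l h1 h2 => hfalse l (by omega) (by omega))
    have hwv : w ≤ v := le_down (by omega)
      (fun l h1 h2 => hfalse l (by omega) (by omega))
    F.map (homOfLE hwv) (gdown m w (by omega) hyw)
      - η ⟨(w, v), hwv, Or.inr (show w.idx = v.idx + 1 by omega)⟩ ⟨hyw⟩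

lemma gup_congr (m m' : ℕ) (hm : m = m') (v : Zigzag n o) (hv : v.idx = y.idx + m)
    (hv' : v.idx = y.idx + m') (h : y ≤ v) :
    gup y η m v hv h = gup y η m' v hv' h := by subst hm; rfl

lemma gdown_congr (m m' : ℕ) (hm : m = m') (v : Zigzag n o) (hv : y.idx = v.idx + m)
    (hv' : y.idx = v.idx + m') (h : y ≤ v) :
    gdown y η m v hv h = gdown y η m' v hv' h := by subst hm; rfl

lemma gup_succ (m : ℕ) (w v : Zigzag n o) (hw : w.idx = y.idx + m)
    (hv : v.idx = y.idx + (m + 1)) (hyw : y ≤ w) (hwv : w ≤ v)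
    (hE : v.idx = w.idx + 1 ∨ w.idx = v.idx + 1) (h : y ≤ v) :
    gup y η (m + 1) v hv h
      = F.map (homOfLE hwv) (gup y η m w hw hyw) - η ⟨(w, v), hwv, hE⟩ ⟨hyw⟩ := by
  have hwlt : y.idx + m < n + 1 := by have := idx_lt v; omega
  obtain rfl : zmk n o (y.idx + m) hwlt = w := zext (by simp [hw])
  rfl

lemma gdown_succ (m : ℕ) (w v : Zigzag n o) (hw : y.idx = w.idx + m)
    (hv : y.idx = v.idx + (m + 1)) (hww : w.idx = v.idx + 1) (hyw : y ≤ w) (hwv : w ≤ v)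
    (hE : v.idx = w.idx + 1 ∨ w.idx = v.idx + 1) (h : y ≤ v) :
    gdown y η (m + 1) v hv h
      = F.map (homOfLE hwv) (gdown y η m w hw hyw) - η ⟨(w, v), hwv, hE⟩ ⟨hyw⟩ := by
  have hwlt : v.idx + 1 < n + 1 := by have := idx_lt y; omega
  obtain rfl : zmk n o (v.idx + 1) hwlt = w := zext (by simp [hww])
  rfl

/-- The combined solution. -/
def gsol : ∀ v : Zigzag n o, PLift (y ≤ v) → F.obj v := fun v h =>
  if hc : y.idx ≤ v.idx then gup y η (v.idx - y.idx) v (by omega) h.down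
  else gdown y η (y.idx - v.idx) v (by omega) h.down

lemma gsol_up (v : Zigzag n o) (h : PLift (y ≤ v)) (hc : y.idx ≤ v.idx) :
    gsol y η v h = gup y η (v.idx - y.idx) v (by omega) h.down := dif_pos hc

lemma gsol_down (v : Zigzag n o) (h : PLift (y ≤ v)) (hc : v.idx ≤ y.idx) :
    gsol y η v h = gdown y η (y.idx - v.idx) v (by omega) h.down := by
  by_cases hc' : y.idx ≤ v.idx
  · have h0 : v.idx - y.idx = 0 := by omega
    have h0' : y.idx - v.idx = 0 := by omega
    rw [gsol_up y η v h hc', gup_congr y η _ 0 h0 v _ (by omega),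
      gdown_congr y η _ 0 h0' v (by omega) (by omega)]
    rfl
  · exact dif_neg hc'

lemma dd_gsol (e : Edge n o) (h : PLift (y ≤ e.src)) :
    F.map (homOfLE e.le) (gsol y η e.src h) - gsol y η e.tgt ⟨h.down.trans e.le⟩
      = η e h := by
  obtain ⟨⟨u, v⟩, huv, hE⟩ := e
  have hle : u ≤ v := huv
  have hd : y ≤ u := h.down
  replace hE : v.idx = u.idx + 1 ∨ u.idx = v.idx + 1 := hE
  rcases hE with hA | hB
  · -- upward edge : v.idx = u.idx + 1
    have hyu : y.idx ≤ u.idx := by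
      by_contra hcon
      have h1 := down_of_le hd (by omega)
      have h2 := up_of_le hle (by omega)
      have := h1 u.idx (by omega) (by omega)
      have := h2 u.idx (by omega) (by omega)
      simp_all
    show F.map (homOfLE hle) (gsol y η u h) - gsol y η v ⟨hd.trans hle⟩
      = η ⟨(u, v), huv, Or.inl hA⟩ h
    rw [gsol_up y η u h hyu, gsol_up y η v _ (by omega),
      gup_congr y η (v.idx - y.idx) ((u.idx - y.idx) + 1) (by omega) v (by omega) (by omega),
      gup_succ y η (u.idx - y.idx) u v (by omega) (by omega) hd hle
        (Or.inl hA) (hd.trans hle)]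
    rw [sub_sub_cancel]
  · -- downward edge : u.idx = v.idx + 1
    have hyu : u.idx ≤ y.idx := by
      by_contra hcon
      have h1 := up_of_le hd (by omega)
      have h2 := down_of_le hle (by omega)
      have := h1 v.idx (by omega) (by omega)
      have := h2 v.idx (by omega) (by omega)
      simp_all
    show F.map (homOfLE hle) (gsol y η u h) - gsol y η v ⟨hd.trans hle⟩
      = η ⟨(u, v), huv, Or.inr hB⟩ h
    rw [gsol_down y η u h hyu, gsol_down y η v _ (by omega),
      gdown_congr y η (y.idx - v.idx) ((y.idx - u.idx) + 1) (by omega) v (by omega) (by omega),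
      gdown_succ y η (y.idx - u.idx) u v (by omega) (by omega) hB hd hle
        (Or.inr hB) (hd.trans hle)]
    rw [sub_sub_cancel]

end surj

end ZigzagVanish
namespace ZigzagVanish

open CategoryTheory Limits ZeroObject

variable {k : Type} [Field k] {n : ℕ} {o : ℕ → Bool}
variable (F : Zigzag n o ⥤ ModuleCat k)

lemma injective_of_isZero {C : Type*} [Category C] {X : C} (h : IsZero X) : Injective X :=
  ⟨fun {_ H} _ _ _ => ⟨h.from_ H, h.eq_of_tgt _ _⟩⟩

lemma exact_of_eval (S : ShortComplex (Zigzag n o ⥤ ModuleCat k))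
    (h : ∀ y, (S.map ((evaluation (Zigzag n o) (ModuleCat k)).obj y)).Exact) : S.Exact := by
  rw [ShortComplex.exact_iff_isZero_homology, Functor.isZero_iff]
  intro y
  exact IsZero.of_iso ((ShortComplex.exact_iff_isZero_homology _).mp (h y))
    (S.mapHomologyIso ((evaluation (Zigzag n o) (ModuleCat k)).obj y)).symm

lemma mono_eps : Mono (eps F) := by
  rw [NatTrans.mono_iff_mono_app]
  intro y
  rw [ModuleCat.mono_iff_injective]
  intro a b hab
  have h1 := congrFun (congrFun hab y) ⟨le_rfl⟩
  have h2 : F.map (homOfLE (le_refl y)) a = F.map (homOfLE (le_refl y)) b := h1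
  rwa [hom_eq (homOfLE (le_refl y)) (𝟙 y), F.map_id, ModuleCat.id_apply,
    ModuleCat.id_apply] at h2

lemma epi_dd : Epi (dd F) := by
  rw [NatTrans.epi_iff_epi_app]
  intro y
  rw [ModuleCat.epi_iff_surjective]
  intro η
  exact ⟨gsol y η, funext fun e => funext fun h => dd_gsol y η e h⟩

lemma exact0 : (ShortComplex.mk (eps F) (dd F) (eps_dd F)).Exact := by
  apply exact_of_eval
  intro y
  rw [ShortComplex.moduleCat_exact_iff]
  intro g hg
  refine ⟨g y ⟨le_rfl⟩, ?_⟩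
  have hg' : ∀ (e : Edge n o) (hh : PLift (y ≤ e.src)),
      F.map (homOfLE e.le) (g e.src hh) = g e.tgt ⟨hh.down.trans e.le⟩ := by
    intro e hh
    have h0 := congrFun (congrFun hg e) hh
    have h1 : F.map (homOfLE e.le) (g e.src hh) - g e.tgt ⟨hh.down.trans e.le⟩ = 0 := h0
    exact sub_eq_zero.mp h1
  funext v h
  show F.map (homOfLE h.down) (g y ⟨le_rfl⟩) = g v h
  rcases le_or_gt y.idx v.idx with hc | hc
  · exact (compat_up y g hg' (v.idx - y.idx) v (by omega) h.down).symm
  · exact (compat_down y g hg' (y.idx - v.idx) v (by omega) h.down).symm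

/-- The cochain complex `I0 F ⟶ I1 F ⟶ 0 ⟶ ...`. -/
noncomputable def cpx : CochainComplex (Zigzag n o ⥤ ModuleCat k) ℕ where
  X j := match j with | 0 => I0 F | 1 => I1 F | (_+2) => 0
  d i j := match i, j with
    | 0, 1 => dd F
    | _, _ => 0
  shape i j w := by
    match i, j with
    | 0, 0 => rfl
    | 0, 1 => exact absurd rfl w
    | 0, (j+2) => rfl
    | (i+1), j => rfl
  d_comp_d' i j k hij hjk := by
    obtain rfl : i + 1 = j := hij
    obtain rfl : i + 1 + 1 = k := hjk
    match i with
    | 0 => exact comp_zero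
    | (i+1) => exact zero_comp

/-- The two-term injective resolution of `F`. -/
noncomputable def resolution : InjectiveResolution F where
  cocomplex := cpx F
  injective j := match j with
    | 0 => cofree_injective _ _
    | 1 => cofree_injective _ _
    | (_+2) => injective_of_isZero (isZero_zero _)
  ι := (CochainComplex.fromSingle₀Equiv _ _).symm ⟨eps F, eps_dd F⟩
  quasiIso := ⟨fun j => by
    cases j with
    | zero =>
      rw [CochainComplex.quasiIsoAt₀_iff, ShortComplex.quasiIso_iff_of_zeros]
      · refine (ShortComplex.exact_and_mono_f_iff_of_iso ?_).2 ⟨exact0 F, mono_eps F⟩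
        refine ShortComplex.isoMk (Iso.refl _) (Iso.refl _) (Iso.refl _) ?_ ?_
        · exact (Category.id_comp (eps F)).trans
            ((CochainComplex.fromSingle₀Equiv_symm_apply_f_zero (C := cpx F) (X := F) (eps F)
              (eps_dd F)).symm.trans (Category.comp_id _).symm)
        · show dd F ≫ 𝟙 _ = 𝟙 _ ≫ (cpx F).d 0 1
          rw [Category.comp_id, Category.id_comp]
          rfl
      all_goals rfl
    | succ j =>
      rw [quasiIsoAt_iff_exactAt]
      · rw [HomologicalComplex.exactAt_iff' _ j (j + 1) (j + 2) (by simp) (by simp)]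
        cases j with
        | zero =>
          refine (ShortComplex.exact_iff_epi _ rfl).2 ?_
          exact epi_dd F
        | succ j =>
          exact ShortComplex.exact_of_isZero_X₂ _ (isZero_zero _)
      · apply CochainComplex.exactAt_succ_single_obj⟩

end ZigzagVanish
universe u_1

/-- Let `X` be a zigzag poset and `F` a sheaf of finite-dimensional
vector spaces on `X`.  Then the sheaf cohomology (right derived functors of the limit
functor) vanishes in degrees `≥ 2`: `H^j(X, F) = 0` for all `j ≥ 2`. -/
theorem cohomology_zigzag_vanishes (k : Type) [Field k] (n : ℕ) (o : ℕ → Bool)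
    [(lim : (Zigzag n o ⥤ ModuleCat.{u_1} k) ⥤ ModuleCat.{u_1} k).Additive]
    [HasInjectiveResolutions (Zigzag n o ⥤ ModuleCat.{u_1} k)]
    (F : Zigzag n o ⥤ ModuleCat.{u_1} k) (hfin : ∀ x : Zigzag n o, Module.Finite k (F.obj x))
    (j : ℕ) (hj : 2 ≤ j) :
    Limits.IsZero (((lim : (Zigzag n o ⥤ ModuleCat.{u_1} k) ⥤ ModuleCat.{u_1} k).rightDerived j).obj F) := by
  obtain ⟨m, rfl⟩ : ∃ m, j = m + 2 := ⟨j - 2, by omega⟩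
  refine Limits.IsZero.of_iso ?_
    ((ZigzagVanish.resolution F).isoRightDerivedObj
      (lim : (Zigzag n o ⥤ ModuleCat.{u_1} k) ⥤ ModuleCat.{u_1} k) (m + 2))
  erw [← HomologicalComplex.exactAt_iff_isZero_homology]
  exact ShortComplex.exact_of_isZero_X₂ _
    ((lim : (Zigzag n o ⥤ ModuleCat.{u_1} k) ⥤ ModuleCat.{u_1} k).map_isZero (Limits.isZero_zero _))
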